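/- arXiv:2106.10520 — 4 statements merged into one kernel-verified Lean document; each statement's English description precedes it below -/
import Mathlib

section
/- Let A ∈ R^{n×d}, S ∈ R^{n×τ}, b ∈ Range(A), and H a symmetric positive definite d×d matrix. Then the optimization problem min_x (1/2)‖x‖_H² subject to SᵀAx = Sᵀb has a unique solution given by x* = H⁻¹AᵀS(SᵀAH⁻¹AᵀS)†Sᵀb. -/
open Matrix

/-- `N` is the Moore–Penrose pseudoinverse of `M`. -/
def IsMoorePenrose {m n : ℕ} (M : Matrix (Fin m) (Fin n) ℝ)
    (N : Matrix (Fin n) (Fin m) ℝ) : Prop :=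
  M * N * M = M ∧ N * M * N = N ∧ (M * N)ᵀ = M * N ∧ (N * M)ᵀ = N * M

/-- Sketch-and-project lemma: for `A ∈ ℝ^{n×d}`, `S ∈ ℝ^{n×τ}`, `b ∈ Range(A)` and `H`
symmetric positive definite, the problem `min (1/2)‖x‖_H²` s.t. `SᵀAx = Sᵀb` has the unique
solution `x* = H⁻¹AᵀS(SᵀAH⁻¹AᵀS)†Sᵀb`. -/
theorem sketch_and_project_solution {n d τ : ℕ}
    (A : Matrix (Fin n) (Fin d) ℝ) (S : Matrix (Fin n) (Fin τ) ℝ)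
    (b : Fin n → ℝ) (hb : b ∈ LinearMap.range (Matrix.mulVecLin A))
    (H : Matrix (Fin d) (Fin d) ℝ) (hH : H.PosDef)
    (N : Matrix (Fin τ) (Fin τ) ℝ)
    (hN : IsMoorePenrose (Sᵀ * A * H⁻¹ * Aᵀ * S) N)
    (xstar : Fin d → ℝ)
    (hxstar : xstar = (H⁻¹ * Aᵀ * S * N * Sᵀ).mulVec b) :
    ((Sᵀ * A).mulVec xstar = Sᵀ.mulVec b) ∧
      ∀ x : Fin d → ℝ, (Sᵀ * A).mulVec x = Sᵀ.mulVec b → x ≠ xstar →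
        (1 / 2) * (H.mulVec xstar ⬝ᵥ xstar) < (1 / 2) * (H.mulVec x ⬝ᵥ x) := by
  obtain ⟨y, hy⟩ := hb
  have hy' : A *ᵥ y = b := hy
  obtain ⟨h1, h2, h3, h4⟩ := hN
  set C : Matrix (Fin τ) (Fin d) ℝ := Sᵀ * A with hC
  set M : Matrix (Fin τ) (Fin τ) ℝ := Sᵀ * A * H⁻¹ * Aᵀ * S with hM
  have hCt : Cᵀ = Aᵀ * S := by simp [hC, transpose_mul]
  have hMC : M = C * H⁻¹ * Cᵀ := by
    rw [hM, hCt, hC]; simp only [Matrix.mul_assoc]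
  have hHinv : (H⁻¹).PosDef := hH.inv
  have hHH : H * H⁻¹ = 1 :=
    Matrix.mul_nonsing_inv H ((Matrix.isUnit_iff_isUnit_det H).mp hH.isUnit)
  -- key: D = C - M*N*C = 0
  have hfac : C - M * N * C = (1 - M * N) * C := by
    rw [Matrix.sub_mul, Matrix.one_mul]
  have hzero : (1 - M * N) * M = 0 := by
    rw [Matrix.sub_mul, Matrix.one_mul, h1, sub_self]
  have key : (C - M * N * C) * H⁻¹ * (C - M * N * C)ᵀ = 0 := by
    rw [hfac, transpose_mul]
    calc (1 - M * N) * C * H⁻¹ * (Cᵀ * (1 - M * N)ᵀ)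
        = (1 - M * N) * M * (1 - M * N)ᵀ := by
          rw [hMC]; simp only [Matrix.mul_assoc]
      _ = 0 := by rw [hzero, Matrix.zero_mul]
  set D : Matrix (Fin τ) (Fin d) ℝ := C - M * N * C with hD
  have hDrow : ∀ i, (fun j => D i j) = 0 := by
    intro i
    by_contra hne
    have hpos := hHinv.dotProduct_mulVec_pos hne
    have hentry : (D * H⁻¹ * Dᵀ) i i = (fun j => D i j) ⬝ᵥ H⁻¹ *ᵥ (fun j => D i j) := by
      simp only [Matrix.mul_apply, Matrix.transpose_apply, Matrix.mulVec, dotProduct,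
        Finset.sum_mul, Finset.mul_sum]
      rw [Finset.sum_comm]
      apply Finset.sum_congr rfl; intro k _
      apply Finset.sum_congr rfl; intro j _
      ring
    rw [key] at hentry
    simp only [Matrix.zero_apply] at hentry
    rw [star_trivial] at hpos
    rw [← hentry] at hpos
    exact lt_irrefl _ hpos
  have hDzero : D = 0 := by
    ext i j; exact congrFun (hDrow i) j
  have hMNC : M * N * C = C := by
    have h0 : C - M * N * C = 0 := hDzero
    linear_combination (norm := abel) -h0
  -- feasibility
  have hfeas : C *ᵥ xstar = Sᵀ *ᵥ b := by
    rw [hxstar, Matrix.mulVec_mulVec, ← hy', Matrix.mulVec_mulVec, Matrix.mulVec_mulVec]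
    have e : C * (H⁻¹ * Aᵀ * S * N * Sᵀ) * A = C := by
      calc C * (H⁻¹ * Aᵀ * S * N * Sᵀ) * A
          = M * N * C := by rw [hM, hC]; simp only [Matrix.mul_assoc]
        _ = C := hMNC
    rw [e, hC]
  refine ⟨hfeas, ?_⟩
  intro x hx hxne
  -- H xstar = Cᵀ *ᵥ (N*Sᵀ *ᵥ b)
  have hHx : H *ᵥ xstar = Cᵀ *ᵥ ((N * Sᵀ) *ᵥ b) := by
    rw [hxstar, Matrix.mulVec_mulVec, Matrix.mulVec_mulVec]
    have e2 : H * (H⁻¹ * Aᵀ * S * N * Sᵀ) = Cᵀ * (N * Sᵀ) := by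
      calc H * (H⁻¹ * Aᵀ * S * N * Sᵀ) = (H * H⁻¹) * (Aᵀ * S * N * Sᵀ) := by
            simp only [Matrix.mul_assoc]
        _ = Aᵀ * S * N * Sᵀ := by rw [hHH, Matrix.one_mul]
        _ = Cᵀ * (N * Sᵀ) := by rw [hCt]; simp only [Matrix.mul_assoc]
    rw [e2]
  set w : Fin d → ℝ := x - xstar with hw
  have hwne : w ≠ 0 := fun h => hxne (by rwa [hw, sub_eq_zero] at h)
  have hCw : C *ᵥ w = 0 := by
    rw [hw, Matrix.mulVec_sub, hx, hfeas, sub_self]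
  have hcross : (H *ᵥ xstar) ⬝ᵥ w = 0 := by
    rw [hHx, dotProduct_comm, Matrix.dotProduct_mulVec, Matrix.vecMul_transpose, hCw,
      zero_dotProduct]
  have hHsymm : Hᵀ = H := by
    have := hH.1
    simpa [Matrix.conjTranspose_eq_transpose_of_trivial, Matrix.IsHermitian] using this
  have hcross2 : (H *ᵥ w) ⬝ᵥ xstar = 0 := by
    rw [dotProduct_comm, Matrix.dotProduct_mulVec, ← Matrix.mulVec_transpose, hHsymm]
    exact hcross
  have hquad : 0 < (H *ᵥ w) ⬝ᵥ w := by
    have := hH.dotProduct_mulVec_pos hwne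
    rw [star_trivial] at this
    rwa [dotProduct_comm]
  have hexp : H *ᵥ x ⬝ᵥ x = H *ᵥ xstar ⬝ᵥ xstar + (H *ᵥ w) ⬝ᵥ w := by
    have hxw : x = xstar + w := by rw [hw]; abel
    rw [hxw, Matrix.mulVec_add, add_dotProduct, dotProduct_add, dotProduct_add, hcross, hcross2]
    ring
  have : (H.mulVec xstar ⬝ᵥ xstar) < (H.mulVec x ⬝ᵥ x) := by
    rw [hexp]; linarith
  linarith
end

section
/- Let H_j be a d×d symmetric positive definite matrix, c_j, ŵ, α̂_1,…,α̂_n ∈ R^d. The problem of minimizing (1/2)∑_{i=1}^n ‖α_i − α̂_i‖² + (1/2)‖w − ŵ‖²_{H_j} subject to H_j(w − ŵ) − α_j = c_j has a unique solution: w = ŵ + (I + H_j)⁻¹(c_j + α̂_j), α_j = α̂_j − (I + H_j)⁻¹(c_j + α̂_j), and α_i = α̂_i for i ≠ j. -/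
open Matrix

/-- The SAN projection subproblem: minimizing
`(1/2)∑ᵢ ‖αᵢ − α̂ᵢ‖² + (1/2)‖w − ŵ‖²_{H_j}` subject to `H_j(w − ŵ) − α_j = c_j`
has the unique solution `w = ŵ + (I + H_j)⁻¹(c_j + α̂_j)`,
`α_j = α̂_j − (I + H_j)⁻¹(c_j + α̂_j)`, and `α_i = α̂_i` for `i ≠ j`. -/
theorem SAN_projection_closed_form {d n : ℕ} (j : Fin n)
    (Hj : Matrix (Fin d) (Fin d) ℝ) (hHj : Hj.PosDef)
    (cj what : Fin d → ℝ) (alphahat : Fin n → Fin d → ℝ)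
    (wstar : Fin d → ℝ) (alphastar : Fin n → Fin d → ℝ)
    (hw : wstar = what + (1 + Hj)⁻¹.mulVec (cj + alphahat j))
    (haj : alphastar j = alphahat j - (1 + Hj)⁻¹.mulVec (cj + alphahat j))
    (hai : ∀ i : Fin n, i ≠ j → alphastar i = alphahat i) :
    (Hj.mulVec (wstar - what) - alphastar j = cj) ∧
      ∀ (w : Fin d → ℝ) (alpha : Fin n → Fin d → ℝ),
        Hj.mulVec (w - what) - alpha j = cj → (w, alpha) ≠ (wstar, alphastar) →
          (1 / 2) * (∑ i, (alphastar i - alphahat i) ⬝ᵥ (alphastar i - alphahat i)) +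
            (1 / 2) * (Hj.mulVec (wstar - what) ⬝ᵥ (wstar - what)) <
          (1 / 2) * (∑ i, (alpha i - alphahat i) ⬝ᵥ (alpha i - alphahat i)) +
            (1 / 2) * (Hj.mulVec (w - what) ⬝ᵥ (w - what)) := by
  have hpd : (1 + Hj).PosDef := Matrix.PosDef.one.add hHj
  have hunit : IsUnit (1 + Hj).det := (Matrix.isUnit_iff_isUnit_det _).mp hpd.isUnit
  set u : Fin d → ℝ := (1 + Hj)⁻¹.mulVec (cj + alphahat j) with hu
  have hwu : wstar - what = u := by rw [hw]; abel
  have hau : alphastar j - alphahat j = -u := by rw [haj]; abel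
  -- symmetry of Hj in dot products
  have hsym : ∀ x y : Fin d → ℝ, Hj.mulVec x ⬝ᵥ y = x ⬝ᵥ Hj.mulVec y := by
    intro x y
    rw [dotProduct_mulVec, ← Matrix.mulVec_transpose]
    congr 1
    rw [show Hjᵀ = Hj from by simpa using hHj.isHermitian.eq]
  -- feasibility
  have hfeas : Hj.mulVec (wstar - what) - alphastar j = cj := by
    have h1 : (1 + Hj).mulVec u = cj + alphahat j := by
      rw [hu, Matrix.mulVec_mulVec, Matrix.mul_nonsing_inv _ hunit, Matrix.one_mulVec]
    rw [hwu, haj]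
    have := h1
    rw [Matrix.add_mulVec, Matrix.one_mulVec] at this
    funext k
    have := congrFun this k
    simp only [Pi.add_apply, Pi.sub_apply] at *
    linarith
  refine ⟨hfeas, ?_⟩
  intro w alpha hcon hne
  set δ : Fin d → ℝ := w - wstar with hδ
  have hwd : w - what = (wstar - what) + δ := by rw [hδ]; abel
  -- alpha j - alphastar j = Hj.mulVec δ
  have hA : alpha j - alphastar j = Hj.mulVec δ := by
    have h1 : alpha j = Hj.mulVec (w - what) - cj := by
      rw [← hcon]; abel
    have h2 : alphastar j = Hj.mulVec (wstar - what) - cj := by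
      rw [← hfeas]; abel
    rw [h1, h2]
    have h3 : (Hj.mulVec (w - what) - cj) - (Hj.mulVec (wstar - what) - cj)
        = Hj.mulVec ((w - what) - (wstar - what)) := by
      conv_rhs => rw [Matrix.mulVec_sub]
      abel
    rw [h3, sub_sub_sub_cancel_right]
  set γ : Fin n → Fin d → ℝ := fun i => alpha i - alphastar i with hγ
  -- sum expansion
  have hsum : ∑ i, (alpha i - alphahat i) ⬝ᵥ (alpha i - alphahat i)
      = (∑ i, (alphastar i - alphahat i) ⬝ᵥ (alphastar i - alphahat i))
        + 2 * ((alphastar j - alphahat j) ⬝ᵥ γ j) + ∑ i, γ i ⬝ᵥ γ i := by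
    have hterm : ∀ i, (alpha i - alphahat i) ⬝ᵥ (alpha i - alphahat i)
        = (alphastar i - alphahat i) ⬝ᵥ (alphastar i - alphahat i)
          + 2 * ((alphastar i - alphahat i) ⬝ᵥ γ i) + γ i ⬝ᵥ γ i := by
      intro i
      have : alpha i - alphahat i = (alphastar i - alphahat i) + γ i := by rw [hγ]; beta_reduce; abel
      rw [this, add_dotProduct, dotProduct_add, dotProduct_add,
        dotProduct_comm (γ i) (alphastar i - alphahat i)]
      ring
    have hcross : ∑ i, (alphastar i - alphahat i) ⬝ᵥ γ i
        = (alphastar j - alphahat j) ⬝ᵥ γ j := by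
      refine Finset.sum_eq_single j (fun i _ hij => ?_) (by simp)
      rw [hai i hij, sub_self, zero_dotProduct]
    calc ∑ i, (alpha i - alphahat i) ⬝ᵥ (alpha i - alphahat i)
        = ∑ i, ((alphastar i - alphahat i) ⬝ᵥ (alphastar i - alphahat i)
          + 2 * ((alphastar i - alphahat i) ⬝ᵥ γ i) + γ i ⬝ᵥ γ i) := by
          exact Finset.sum_congr rfl (fun i _ => hterm i)
      _ = (∑ i, (alphastar i - alphahat i) ⬝ᵥ (alphastar i - alphahat i))
          + 2 * (∑ i, (alphastar i - alphahat i) ⬝ᵥ γ i) + ∑ i, γ i ⬝ᵥ γ i := by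
          rw [Finset.sum_add_distrib, Finset.sum_add_distrib, Finset.mul_sum]
      _ = _ := by rw [hcross]
  -- quadratic expansion
  have hquad : Hj.mulVec (w - what) ⬝ᵥ (w - what)
      = Hj.mulVec (wstar - what) ⬝ᵥ (wstar - what)
        + 2 * (u ⬝ᵥ Hj.mulVec δ) + Hj.mulVec δ ⬝ᵥ δ := by
    rw [hwd, Matrix.mulVec_add, add_dotProduct, dotProduct_add, dotProduct_add]
    rw [hwu]
    have e1 : Hj.mulVec u ⬝ᵥ δ = u ⬝ᵥ Hj.mulVec δ := hsym u δ
    have e2 : Hj.mulVec δ ⬝ᵥ u = u ⬝ᵥ Hj.mulVec δ := dotProduct_comm _ _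
    rw [e1, e2]; ring
  have hγj : γ j = Hj.mulVec δ := hA
  have hcrossj : (alphastar j - alphahat j) ⬝ᵥ γ j = -(u ⬝ᵥ Hj.mulVec δ) := by
    rw [hau, hγj, neg_dotProduct]
  -- positivity
  have hγnn : ∀ i : Fin n, (0:ℝ) ≤ γ i ⬝ᵥ γ i := by
    intro i
    exact Finset.sum_nonneg fun k _ => mul_self_nonneg _
  have hδnn : (0:ℝ) ≤ Hj.mulVec δ ⬝ᵥ δ := by
    rw [dotProduct_comm]
    simpa using hHj.posSemidef.dotProduct_mulVec_nonneg δ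
  have hpos : 0 < (∑ i, γ i ⬝ᵥ γ i) + Hj.mulVec δ ⬝ᵥ δ := by
    by_cases hd : δ = 0
    · have hwe : w = wstar := by
        have := hδ ▸ hd
        exact sub_eq_zero.mp this
      have hae : alpha ≠ alphastar := by
        intro h; exact hne (by rw [hwe, h])
      obtain ⟨i, hi⟩ : ∃ i, alpha i ≠ alphastar i := by
        by_contra h
        push_neg at h
        exact hae (funext h)
      have hgi : γ i ≠ 0 := fun h => hi (sub_eq_zero.mp h)
      have : 0 < γ i ⬝ᵥ γ i :=
        lt_of_le_of_ne (hγnn i) (fun h => hgi (dotProduct_self_eq_zero.mp h.symm))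
      have hs : 0 < ∑ i, γ i ⬝ᵥ γ i :=
        Finset.sum_pos' (fun k _ => hγnn k) ⟨i, Finset.mem_univ i, this⟩
      linarith
    · have : 0 < Hj.mulVec δ ⬝ᵥ δ := by
        rw [dotProduct_comm]
        simpa using hHj.dotProduct_mulVec_pos hd
      have hsnn : (0:ℝ) ≤ ∑ i, γ i ⬝ᵥ γ i := Finset.sum_nonneg fun k _ => hγnn k
      linarith
  rw [hsum, hquad, hcrossj]
  linarith [hpos]
end

section
/- Let H_j be a d×d symmetric positive definite matrix, c_j, ŵ ∈ R^d, and α̂_1,…,α̂_n ∈ R^d with ∑_i α̂_i = 0. The problem of minimizing (1/2)∑_i ‖α_i − α̂_i‖² + (1/2)‖w − ŵ‖²_{H_j} subject to H_j(w − ŵ) − α_j = c_j and ∑_i α_i = 0 has unique solution: w = ŵ + d, α_j = α̂_j − ((n−1)/n)d, α_i = α̂_i + (1/n)d for i ≠ j, where d = (((n−1)/n)I + H_j)⁻¹(c_j + α̂_j). -/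
open Matrix

private lemma dot_sum_right {m d : ℕ} (v : Fin d → ℝ) (f : Fin m → Fin d → ℝ) :
    ∑ i, v ⬝ᵥ f i = v ⬝ᵥ ∑ i, f i := by
  simp only [dotProduct, Finset.sum_apply, Finset.mul_sum]
  rw [Finset.sum_comm]

private lemma symm_dot {d : ℕ} {H : Matrix (Fin d) (Fin d) ℝ} (hH : H.IsHermitian)
    (a b : Fin d → ℝ) : H.mulVec a ⬝ᵥ b = a ⬝ᵥ H.mulVec b := by
  have hsymm : Hᵀ = H := by
    ext i k
    have := congrFun (congrFun hH.eq i) k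
    simpa [conjTranspose_apply] using this
  calc H *ᵥ a ⬝ᵥ b = Hᵀᵀ *ᵥ a ⬝ᵥ b := by rw [transpose_transpose]
    _ = (a ᵥ* Hᵀ) ⬝ᵥ b := by rw [mulVec_transpose]
    _ = (a ᵥ* H) ⬝ᵥ b := by rw [hsymm]
    _ = a ⬝ᵥ H *ᵥ b := (dotProduct_mulVec a H b).symm

private lemma sq_expand {d : ℕ} (u v : Fin d → ℝ) :
    (u + v) ⬝ᵥ (u + v) = u ⬝ᵥ u + 2 * (u ⬝ᵥ v) + v ⬝ᵥ v := by
  rw [add_dotProduct, dotProduct_add, dotProduct_add, dotProduct_comm v u]; ring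

private lemma dot_self_nonneg {d : ℕ} (v : Fin d → ℝ) : 0 ≤ v ⬝ᵥ v :=
  Finset.sum_nonneg fun i _ => mul_self_nonneg _

private lemma dot_self_pos {d : ℕ} {v : Fin d → ℝ} (h : v ≠ 0) : 0 < v ⬝ᵥ v := by
  rcases (dot_self_nonneg v).lt_or_eq with h' | h'
  · exact h'
  · exact absurd (dotProduct_self_eq_zero.mp h'.symm) h

/-- The SANA projection subproblem: minimizing
`(1/2)∑ᵢ ‖αᵢ − α̂ᵢ‖² + (1/2)‖w − ŵ‖²_{H_j}` subject to `H_j(w − ŵ) − α_j = c_j` and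
`∑ᵢ αᵢ = 0` (with `∑ᵢ α̂ᵢ = 0`) has the unique solution `w = ŵ + d`,
`α_j = α̂_j − ((n−1)/n)d`, `α_i = α̂_i + (1/n)d` for `i ≠ j`, where
`d = (((n−1)/n)I + H_j)⁻¹(c_j + α̂_j)`. -/
theorem SANA_projection_closed_form {d n : ℕ} (hn : 1 ≤ n) (j : Fin n)
    (Hj : Matrix (Fin d) (Fin d) ℝ) (hHj : Hj.PosDef)
    (cj what : Fin d → ℝ) (alphahat : Fin n → Fin d → ℝ)
    (hsum : ∑ i, alphahat i = 0)
    (dvec : Fin d → ℝ)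
    (hdvec : dvec = ((((n : ℝ) - 1) / n) • (1 : Matrix (Fin d) (Fin d) ℝ) + Hj)⁻¹.mulVec
      (cj + alphahat j))
    (wstar : Fin d → ℝ) (alphastar : Fin n → Fin d → ℝ)
    (hw : wstar = what + dvec)
    (haj : alphastar j = alphahat j - (((n : ℝ) - 1) / n) • dvec)
    (hai : ∀ i : Fin n, i ≠ j → alphastar i = alphahat i + (1 / (n : ℝ)) • dvec) :
    (Hj.mulVec (wstar - what) - alphastar j = cj) ∧ (∑ i, alphastar i = 0) ∧
      ∀ (w : Fin d → ℝ) (alpha : Fin n → Fin d → ℝ),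
        Hj.mulVec (w - what) - alpha j = cj → (∑ i, alpha i = 0) →
          (w, alpha) ≠ (wstar, alphastar) →
          (1 / 2) * (∑ i, (alphastar i - alphahat i) ⬝ᵥ (alphastar i - alphahat i)) +
            (1 / 2) * (Hj.mulVec (wstar - what) ⬝ᵥ (wstar - what)) <
          (1 / 2) * (∑ i, (alpha i - alphahat i) ⬝ᵥ (alpha i - alphahat i)) +
            (1 / 2) * (Hj.mulVec (w - what) ⬝ᵥ (w - what)) := by
  have hn0 : (n : ℝ) ≠ 0 := Nat.cast_ne_zero.2 (by omega)
  have hn1 : (1 : ℝ) ≤ (n : ℝ) := by exact_mod_cast hn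
  set c : ℝ := ((n : ℝ) - 1) / n with hc
  have hc0 : 0 ≤ c := div_nonneg (by linarith) (Nat.cast_nonneg n)
  set M : Matrix (Fin d) (Fin d) ℝ := c • (1 : Matrix (Fin d) (Fin d) ℝ) + Hj with hMdef
  have hMpd : M.PosDef := by
    refine Matrix.PosDef.posSemidef_add ?_ hHj
    rw [smul_one_eq_diagonal]
    exact posSemidef_diagonal_iff.mpr fun i => hc0
  -- key equation: M *ᵥ dvec = cj + alphahat j
  have hMd : M.mulVec dvec = cj + alphahat j := by
    rw [hdvec, mulVec_mulVec, Matrix.mul_nonsing_inv _ (isUnit_iff_ne_zero.mpr hMpd.det_pos.ne'),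
      one_mulVec]
  have hkey : Hj.mulVec dvec + c • dvec = cj + alphahat j := by
    have : M.mulVec dvec = c • dvec + Hj.mulVec dvec := by
      rw [hMdef, add_mulVec, smul_mulVec, one_mulVec]
    rw [← hMd, this]; abel
  have hws : wstar - what = dvec := by rw [hw]; abel
  -- feasibility 1
  have feas1 : Hj.mulVec (wstar - what) - alphastar j = cj := by
    rw [hws, haj]
    have : Hj *ᵥ dvec = cj + alphahat j - c • dvec := by
      rw [← hkey]; abel
    rw [this]; abel
  -- feasibility 2
  have hstar_eq : ∀ i, alphastar i =
      alphahat i + (1 / (n : ℝ)) • dvec - (if i = j then dvec else 0) := by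
    intro i
    by_cases hij : i = j
    · subst hij
      have hcoe : c = 1 - 1 / (n : ℝ) := by rw [hc]; field_simp
      have h2 : c • dvec = dvec - (1 / (n : ℝ)) • dvec := by
        rw [hcoe, sub_smul, one_smul]
      rw [haj, if_pos rfl, h2]; abel
    · rw [hai i hij, if_neg hij, sub_zero]
  have feas2 : ∑ i, alphastar i = 0 := by
    have : ∑ i, alphastar i =
        ∑ i, (alphahat i + (1 / (n : ℝ)) • dvec - (if i = j then dvec else 0)) :=
      Finset.sum_congr rfl fun i _ => hstar_eq i
    rw [this, Finset.sum_sub_distrib, Finset.sum_add_distrib, hsum, zero_add,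
      Finset.sum_const, Finset.sum_ite_eq' Finset.univ j (fun _ => dvec),
      if_pos (Finset.mem_univ j), Finset.card_univ, Fintype.card_fin]
    ext k
    simp only [Pi.sub_apply, Pi.smul_apply, Pi.zero_apply, smul_eq_mul, nsmul_eq_mul, Pi.mul_apply,
      Pi.natCast_apply]
    field_simp
    ring
  refine ⟨feas1, feas2, ?_⟩
  intro w alpha hfeas1 hfeas2 hne
  set δw := w - wstar with hδw
  set δ : Fin n → Fin d → ℝ := fun i => alpha i - alphastar i with hδ
  have hδsum : ∑ i, δ i = 0 := by
    simp only [hδ]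
    rw [Finset.sum_sub_distrib, hfeas2, feas2, sub_zero]
  have hHδw : Hj.mulVec δw = δ j := by
    have e1 : Hj.mulVec (w - what) = cj + alpha j := by rw [← hfeas1]; abel
    have e2 : Hj.mulVec (wstar - what) = cj + alphastar j := by rw [← feas1]; abel
    have h1 : Hj.mulVec (w - what) - Hj.mulVec (wstar - what) = alpha j - alphastar j := by
      rw [e1, e2]; abel
    rw [← Matrix.mulVec_sub] at h1
    have h2 : (w - what) - (wstar - what) = δw := by rw [hδw]; abel
    rw [h2] at h1
    exact h1
  -- linear term in alpha
  have hustar : ∀ i, alphastar i - alphahat i =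
      (1 / (n : ℝ)) • dvec - (if i = j then dvec else 0) := by
    intro i; rw [hstar_eq i]; abel
  have hlinα : ∑ i, (alphastar i - alphahat i) ⬝ᵥ δ i = -(dvec ⬝ᵥ δ j) := by
    have h1 : ∀ i, (alphastar i - alphahat i) ⬝ᵥ δ i =
        (1 / (n : ℝ)) * (dvec ⬝ᵥ δ i) - (if i = j then dvec ⬝ᵥ δ i else 0) := by
      intro i
      rw [hustar i, sub_dotProduct, smul_dotProduct, smul_eq_mul]
      congr 1
      by_cases hij : i = j
      · simp [hij]
      · simp [hij]
    rw [Finset.sum_congr rfl fun i _ => h1 i, Finset.sum_sub_distrib, ← Finset.mul_sum,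
      dot_sum_right, hδsum, dotProduct_zero, mul_zero,
      Finset.sum_ite_eq' Finset.univ j (fun i => dvec ⬝ᵥ δ i), if_pos (Finset.mem_univ j)]
    ring
  -- quadratic expansion of alpha terms
  have hexpα : ∀ i, (alpha i - alphahat i) ⬝ᵥ (alpha i - alphahat i) =
      (alphastar i - alphahat i) ⬝ᵥ (alphastar i - alphahat i)
        + 2 * ((alphastar i - alphahat i) ⬝ᵥ δ i) + δ i ⬝ᵥ δ i := by
    intro i
    have h : alpha i - alphahat i = (alphastar i - alphahat i) + δ i := by
      rw [hδ]; ext k; simp only [Pi.sub_apply, Pi.add_apply]; ring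
    rw [h, sq_expand]
  -- quadratic expansion of the w term
  have hexpw : Hj.mulVec (w - what) ⬝ᵥ (w - what) =
      Hj.mulVec (wstar - what) ⬝ᵥ (wstar - what) + 2 * (dvec ⬝ᵥ δ j)
        + Hj.mulVec δw ⬝ᵥ δw := by
    have h : w - what = (wstar - what) + δw := by rw [hδw]; abel
    rw [h, Matrix.mulVec_add, add_dotProduct, dotProduct_add, dotProduct_add, hws]
    have h1 : Hj *ᵥ dvec ⬝ᵥ δw = dvec ⬝ᵥ δ j := by
      rw [symm_dot hHj.isHermitian, hHδw]
    have h2 : Hj *ᵥ δw ⬝ᵥ dvec = dvec ⬝ᵥ δ j := by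
      rw [hHδw, dotProduct_comm]
    rw [h1, h2]; ring
  -- total difference
  have hdiff : (1 / 2) * (∑ i, (alpha i - alphahat i) ⬝ᵥ (alpha i - alphahat i)) +
      (1 / 2) * (Hj.mulVec (w - what) ⬝ᵥ (w - what))
      - ((1 / 2) * (∑ i, (alphastar i - alphahat i) ⬝ᵥ (alphastar i - alphahat i)) +
        (1 / 2) * (Hj.mulVec (wstar - what) ⬝ᵥ (wstar - what)))
      = (1 / 2) * (∑ i, δ i ⬝ᵥ δ i) + (1 / 2) * (Hj.mulVec δw ⬝ᵥ δw) := by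
    rw [Finset.sum_congr rfl fun i _ => hexpα i, hexpw]
    rw [Finset.sum_add_distrib, Finset.sum_add_distrib, ← Finset.mul_sum, hlinα]
    ring
  have hpos : 0 < (1 / 2) * (∑ i, δ i ⬝ᵥ δ i) + (1 / 2) * (Hj.mulVec δw ⬝ᵥ δw) := by
    have hsumnn : 0 ≤ ∑ i, δ i ⬝ᵥ δ i := Finset.sum_nonneg fun i _ => dot_self_nonneg _
    by_cases hδw0 : δw = 0
    · have h0 : w - wstar = 0 := by rw [← hδw]; exact hδw0
      have hwz : w = wstar := sub_eq_zero.mp h0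
      have hαne : alpha ≠ alphastar := by
        intro h; exact hne (by rw [hwz, h])
      obtain ⟨i0, hi0⟩ := Function.ne_iff.mp hαne
      have hδi : δ i0 ≠ 0 := by
        intro h
        have h' : alpha i0 - alphastar i0 = 0 := h
        exact hi0 (sub_eq_zero.mp h')
      have hsp : 0 < ∑ i, δ i ⬝ᵥ δ i :=
        Finset.sum_pos' (fun i _ => dot_self_nonneg _)
          ⟨i0, Finset.mem_univ _, dot_self_pos hδi⟩
      have hq : (0:ℝ) ≤ Hj.mulVec δw ⬝ᵥ δw := by
        rw [hδw0]; simp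
      linarith
    · have h := hHj.dotProduct_mulVec_pos hδw0
      rw [star_trivial, dotProduct_comm] at h
      nlinarith
  linarith [hdiff, hpos]
end

section
/- Let S_1, …, S_r be p×τ_i matrices, p_1, …, p_r > 0, and G_i symmetric positive definite p×p matrices. Define H = ∑_i p_i S_i (S_iᵀ G_i S_i)† S_iᵀ. If ∑_i p_i S_i S_iᵀ is invertible, then H is invertible. -/
open Matrix

/-- Uniqueness of the Moore–Penrose pseudoinverse. -/
lemma mp_unique {m n : ℕ} {M : Matrix (Fin m) (Fin n) ℝ} {N₁ N₂ : Matrix (Fin n) (Fin m) ℝ}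
    (h₁ : IsMoorePenrose M N₁) (h₂ : IsMoorePenrose M N₂) : N₁ = N₂ := by
  obtain ⟨a1, b1, c1, d1⟩ := h₁
  obtain ⟨a2, b2, c2, d2⟩ := h₂
  have hMN : M * N₁ = M * N₂ := by
    calc M * N₁ = (M * N₁)ᵀ := c1.symm
    _ = N₁ᵀ * Mᵀ := by rw [transpose_mul]
    _ = N₁ᵀ * (M * N₂ * M)ᵀ := by rw [a2]
    _ = N₁ᵀ * (Mᵀ * (M * N₂)ᵀ) := by rw [transpose_mul]
    _ = (N₁ᵀ * Mᵀ) * (M * N₂) := by rw [c2]; simp only [Matrix.mul_assoc]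
    _ = (M * N₁)ᵀ * (M * N₂) := by rw [transpose_mul]
    _ = (M * N₁) * (M * N₂) := by rw [c1]
    _ = (M * N₁ * M) * N₂ := by simp only [Matrix.mul_assoc]
    _ = M * N₂ := by rw [a1]
  have hNM : N₁ * M = N₂ * M := by
    calc N₁ * M = (N₁ * M)ᵀ := d1.symm
    _ = Mᵀ * N₁ᵀ := by rw [transpose_mul]
    _ = (M * N₂ * M)ᵀ * N₁ᵀ := by rw [a2]
    _ = ((N₂ * M)ᵀ * Mᵀ) * N₁ᵀ := by
        rw [show M * N₂ * M = M * (N₂ * M) from Matrix.mul_assoc _ _ _, transpose_mul]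
    _ = (N₂ * M) * (Mᵀ * N₁ᵀ) := by rw [d2]; simp only [Matrix.mul_assoc]
    _ = (N₂ * M) * (N₁ * M)ᵀ := by rw [transpose_mul]
    _ = (N₂ * M) * (N₁ * M) := by rw [d1]
    _ = N₂ * (M * N₁ * M) := by simp only [Matrix.mul_assoc]
    _ = N₂ * M := by rw [a1]
  calc N₁ = N₁ * M * N₁ := b1.symm
  _ = N₁ * (M * N₂) := by rw [Matrix.mul_assoc, hMN]
  _ = (N₂ * M) * N₂ := by rw [← Matrix.mul_assoc, hNM]
  _ = N₂ := b2

lemma mp_transpose {m n : ℕ} {M : Matrix (Fin m) (Fin n) ℝ} {N : Matrix (Fin n) (Fin m) ℝ}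
    (h : IsMoorePenrose M N) : IsMoorePenrose Mᵀ Nᵀ := by
  obtain ⟨a, b, c, d⟩ := h
  refine ⟨?_, ?_, ?_, ?_⟩
  · rw [← transpose_mul, ← transpose_mul, ← Matrix.mul_assoc, a]
  · rw [← transpose_mul, ← transpose_mul, ← Matrix.mul_assoc, b]
  · rw [← transpose_mul, transpose_transpose, d]
  · rw [← transpose_mul, transpose_transpose, c]

/-- For `G` posdef, `B * G * Bᵀ = 0` forces `B = 0`. -/
lemma BGB_zero {a b : ℕ} {G : Matrix (Fin a) (Fin a) ℝ} (hG : G.PosDef)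
    {B : Matrix (Fin b) (Fin a) ℝ} (h : B * G * Bᵀ = 0) : B = 0 := by
  open scoped MatrixOrder in
  obtain ⟨C, hC⟩ : ∃ C : Matrix (Fin a) (Fin a) ℝ, G = Cᴴ * C :=
    CStarAlgebra.nonneg_iff_eq_star_mul_self.mp hG.posSemidef.nonneg
  have hBt : Bᵀ = Bᴴ := (conjTranspose_eq_transpose_of_trivial B).symm
  have h1 : (C * Bᴴ)ᴴ * (C * Bᴴ) = 0 := by
    rw [conjTranspose_mul, conjTranspose_conjTranspose]
    calc B * Cᴴ * (C * Bᴴ) = B * (Cᴴ * C) * Bᴴ := by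
          simp only [Matrix.mul_assoc]
    _ = 0 := by rw [← hC, ← hBt, h]
  have h2 : C * Bᴴ = 0 := conjTranspose_mul_self_eq_zero.mp h1
  have h3 : G * Bᴴ = 0 := by rw [hC, Matrix.mul_assoc, h2, Matrix.mul_zero]
  have h4 : Bᴴ = 0 := by
    calc Bᴴ = G⁻¹ * (G * Bᴴ) := by
          rw [← Matrix.mul_assoc, Matrix.nonsing_inv_mul _
            ((Matrix.isUnit_iff_isUnit_det _).mp hG.isUnit), Matrix.one_mul]
    _ = 0 := by rw [h3, Matrix.mul_zero]
  rw [← hBt] at h4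
  have := congrArg transpose h4
  simpa using this

/-- If `H = ∑ᵢ pᵢ Sᵢ (Sᵢᵀ Gᵢ Sᵢ)† Sᵢᵀ` with `pᵢ > 0`, each `Gᵢ` symmetric positive definite,
and `∑ᵢ pᵢ Sᵢ Sᵢᵀ` invertible, then `H` is invertible. -/
theorem H_invertible {p r : ℕ} (tau : Fin r → ℕ)
    (S : ∀ i : Fin r, Matrix (Fin p) (Fin (tau i)) ℝ)
    (prob : Fin r → ℝ) (hprob : ∀ i, 0 < prob i)
    (G : Fin r → Matrix (Fin p) (Fin p) ℝ) (hG : ∀ i, (G i).PosDef)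
    (N : ∀ i : Fin r, Matrix (Fin (tau i)) (Fin (tau i)) ℝ)
    (hN : ∀ i, IsMoorePenrose ((S i)ᵀ * G i * S i) (N i))
    (hSS : IsUnit (∑ i, prob i • (S i * (S i)ᵀ))) :
    IsUnit (∑ i, prob i • (S i * N i * (S i)ᵀ)) := by
  have hGsymm : ∀ i, (G i)ᵀ = G i := fun i => by
    have := (hG i).isHermitian
    rwa [IsHermitian, conjTranspose_eq_transpose_of_trivial] at this
  set M : ∀ i : Fin r, Matrix (Fin (tau i)) (Fin (tau i)) ℝ :=
    fun i => (S i)ᵀ * G i * S i with hM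
  have hMsymm : ∀ i, (M i)ᵀ = M i := fun i => by
    simp only [hM, transpose_mul, transpose_transpose, hGsymm, Matrix.mul_assoc]
  have hNsymm : ∀ i, (N i)ᵀ = N i := fun i => by
    have h1 : IsMoorePenrose (M i) ((N i)ᵀ) := by
      have := mp_transpose (hN i)
      rwa [hMsymm i] at this
    exact mp_unique h1 (hN i)
  -- D i := S i * N i * (S i)ᵀ is PSD
  have hD : ∀ i, (S i * N i * (S i)ᵀ).PosSemidef := fun i => by
    have key : S i * N i * (S i)ᵀ =
        (S i * N i * (S i)ᵀ)ᴴ * G i * (S i * N i * (S i)ᵀ) := by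
      rw [conjTranspose_eq_transpose_of_trivial]
      have hb := (hN i).2.1
      calc S i * N i * (S i)ᵀ = S i * (N i * M i * N i) * (S i)ᵀ := by rw [hb]
      _ = (S i * N i * (S i)ᵀ)ᵀ * G i * (S i * N i * (S i)ᵀ) := by
          simp only [transpose_mul, transpose_transpose, hNsymm, hM, Matrix.mul_assoc]
    rw [key]
    exact (hG i).posSemidef.conjTranspose_mul_mul_same _
  -- projection fact : M i * N i * (S i)ᵀ = (S i)ᵀ
  have hproj : ∀ i, M i * N i * (S i)ᵀ = (S i)ᵀ := fun i => by
    have hPsymm : (M i * N i)ᵀ = M i * N i := (hN i).2.2.1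
    have hPM : (M i * N i) * M i = M i := (hN i).1
    set X : Matrix (Fin (tau i)) (Fin p) ℝ := (1 - M i * N i) * (S i)ᵀ with hX
    have hXt : Xᵀ = S i * (1 - M i * N i) := by
      rw [hX, transpose_mul, transpose_transpose, transpose_sub, transpose_one, hPsymm]
    have hzero : X * G i * Xᵀ = 0 := by
      have e : X * G i * Xᵀ = ((1 - M i * N i) * M i) * (1 - M i * N i) := by
        rw [hX, hXt, hM]
        simp only [Matrix.mul_assoc]
      rw [e, Matrix.sub_mul, Matrix.one_mul, hPM, sub_self, Matrix.zero_mul]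
    have hX0 : X = 0 := BGB_zero (hG i) hzero
    have h5 : (S i)ᵀ - M i * N i * (S i)ᵀ = 0 := by
      have e2 : (1 - M i * N i) * (S i)ᵀ = (S i)ᵀ - M i * N i * (S i)ᵀ := by
        rw [Matrix.sub_mul, Matrix.one_mul]
      rw [← e2, ← hX, hX0]
    rw [sub_eq_zero] at h5
    exact h5.symm
  -- kernel argument
  set A := ∑ i, prob i • (S i * N i * (S i)ᵀ) with hA
  have esum : ∀ (f : Fin r → Matrix (Fin p) (Fin p) ℝ) (x : Fin p → ℝ),
      (∑ i, f i) *ᵥ x = ∑ i, f i *ᵥ x := fun f x => by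
    ext j
    simp only [mulVec, dotProduct, Finset.sum_apply, Matrix.sum_apply, Finset.sum_mul]
    exact Finset.sum_comm
  have edot : ∀ (x : Fin p → ℝ) (v : Fin r → (Fin p → ℝ)),
      x ⬝ᵥ (∑ i, v i) = ∑ i, x ⬝ᵥ v i := fun x v => by
    simp only [dotProduct, Finset.sum_apply, Finset.mul_sum]
    exact Finset.sum_comm
  have hker : ∀ x : Fin p → ℝ, A *ᵥ x = 0 → x = 0 := by
    intro x hx
    have hdot : x ⬝ᵥ (A *ᵥ x) = 0 := by rw [hx, dotProduct_zero]
    have hexp : A *ᵥ x = ∑ i, prob i • ((S i * N i * (S i)ᵀ) *ᵥ x) := by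
      rw [hA, esum]
      simp [Matrix.smul_mulVec]
    have hsum : ∑ i, prob i * (x ⬝ᵥ ((S i * N i * (S i)ᵀ) *ᵥ x)) = 0 := by
      rw [← hdot, hexp, edot]
      simp [dotProduct_smul, smul_eq_mul]
    have hterm : ∀ i ∈ Finset.univ,
        (0:ℝ) ≤ prob i * (x ⬝ᵥ ((S i * N i * (S i)ᵀ) *ᵥ x)) := by
      intro i _
      have h0 := (hD i).dotProduct_mulVec_nonneg x
      simp only [star_trivial] at h0
      exact mul_nonneg (hprob i).le h0
    have hzero : ∀ i ∈ Finset.univ,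
        prob i * (x ⬝ᵥ ((S i * N i * (S i)ᵀ) *ᵥ x)) = 0 :=
      (Finset.sum_eq_zero_iff_of_nonneg hterm).mp hsum
    have hDi0 : ∀ i, (S i * N i * (S i)ᵀ) *ᵥ x = 0 := by
      intro i
      have h1 := hzero i (Finset.mem_univ i)
      have h2 : x ⬝ᵥ ((S i * N i * (S i)ᵀ) *ᵥ x) = 0 :=
        (mul_eq_zero.mp h1).resolve_left (hprob i).ne'
      have h3 : star x ⬝ᵥ ((S i * N i * (S i)ᵀ) *ᵥ x) = 0 := by
        simpa using h2
      exact ((hD i).dotProduct_mulVec_zero_iff x).mp h3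
    have hSx : ∀ i, (S i)ᵀ *ᵥ x = 0 := by
      intro i
      have e1 : (S i)ᵀ = ((S i)ᵀ * G i) * (S i * N i * (S i)ᵀ) := by
        conv_lhs => rw [← hproj i, hM]
        simp only [Matrix.mul_assoc]
      calc (S i)ᵀ *ᵥ x = (((S i)ᵀ * G i) * (S i * N i * (S i)ᵀ)) *ᵥ x := by rw [← e1]
      _ = ((S i)ᵀ * G i) *ᵥ ((S i * N i * (S i)ᵀ) *ᵥ x) := by
          rw [← Matrix.mulVec_mulVec]
      _ = 0 := by rw [hDi0 i, Matrix.mulVec_zero]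
    have hSSx : (∑ i, prob i • (S i * (S i)ᵀ)) *ᵥ x = 0 := by
      rw [esum]
      refine Finset.sum_eq_zero fun i _ => ?_
      rw [Matrix.smul_mulVec, ← Matrix.mulVec_mulVec, hSx i, Matrix.mulVec_zero,
        smul_zero]
    have hinj := Matrix.mulVec_injective_iff_isUnit.mpr hSS
    have := hinj (a₁ := x) (a₂ := 0) (by simpa using hSSx)
    simpa using this
  rw [← Matrix.mulVec_injective_iff_isUnit]
  intro x y hxy
  have hxy0 : A *ᵥ (x - y) = 0 := by
    rw [Matrix.mulVec_sub, hxy, sub_self]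
  exact sub_eq_zero.mp (hker _ hxy0)
end
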